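/- Let F be a field, m, n natural numbers, and A an m×n matrix over F. Let C = χ · S, where S is the (m+n)×(m+n) symmetric block matrix [[0, A],[Aᵀ, 0]] with entries embedded into F(X), and χ is the diagonal matrix over F(X) with diagonal entries X^0, …, X^{m+n−1}. Then F(X)^{m+n} is the direct sum of the kernel and the image of the linear map v ↦ C·v: for every vector v over F(X) there exists a unique pair (u₁, u₂) with u₁ in the kernel of C, u₂ in the image of C, and v = u₁ + u₂. -/
import Mathlib

open Matrix Polynomial


lemma mulmuley_poly_aux {F : Type*} [Field F] {N : ℕ} (S : Matrix (Fin N) (Fin N) F)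
    (hS : Sᵀ = S) (v : Fin N → F[X])
    (h : (S.map Polynomial.C) *ᵥ (fun i => X ^ (i : ℕ) * ((S.map Polynomial.C) *ᵥ v) i) = 0) :
    (S.map Polynomial.C) *ᵥ v = 0 := by
  classical
  set u : Fin N → F[X] := (S.map Polynomial.C) *ᵥ v with hu
  -- orthogonality relations
  have horth : ∀ l k : ℕ, ∑ i, (u i).coeff l * (X ^ (i : ℕ) * u i).coeff k = 0 := by
    intro l k
    set a : Fin N → F := fun j => (v j).coeff l with ha
    set b : Fin N → F := fun i => (X ^ (i : ℕ) * u i).coeff k with hb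
    have hSb : S *ᵥ b = 0 := by
      funext j
      have hj := congrFun h j
      have : ((S.map Polynomial.C *ᵥ fun i => X ^ (i : ℕ) * u i) j).coeff k = 0 := by
        rw [hj]; simp
      simpa [Matrix.mulVec, dotProduct, finset_sum_coeff, coeff_C_mul, hb,
        Pi.zero_apply] using this
    have hua : ∀ i, (u i).coeff l = (S *ᵥ a) i := by
      intro i
      simp [hu, Matrix.mulVec, dotProduct, finset_sum_coeff, coeff_C_mul, ha]
    calc ∑ i, (u i).coeff l * (X ^ (i : ℕ) * u i).coeff k
        = (S *ᵥ a) ⬝ᵥ b := by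
          simp only [dotProduct]
          exact Finset.sum_congr rfl fun i _ => by rw [hua i]
      _ = a ⬝ᵥ (S *ᵥ b) := by
          rw [Matrix.dotProduct_mulVec, ← Matrix.mulVec_transpose, hS]
      _ = 0 := by rw [hSb]; simp
  -- extremal argument
  by_contra hne
  have hex : ∃ l : ℕ, ∃ i, (u i).coeff l ≠ 0 := by
    have : ∃ i, u i ≠ 0 := by
      by_contra hall
      push_neg at hall
      exact hne (funext hall)
    obtain ⟨i, hi⟩ := this
    obtain ⟨l, hl⟩ := Polynomial.support_nonempty.mpr hi
    rw [Polynomial.mem_support_iff] at hl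
    exact ⟨l, i, hl⟩
  let ν := Nat.find hex
  obtain ⟨i', hi'⟩ := Nat.find_spec hex
  have hνmin : ∀ l' < ν, ∀ i, (u i).coeff l' = 0 := by
    intro l' hl' i
    by_contra hc
    exact Nat.find_min hex hl' ⟨i, hc⟩
  -- minimal index i₀ with (u i₀).coeff ν ≠ 0
  have hexi : ∃ i : ℕ, ∃ hi : i < N, (u ⟨i, hi⟩).coeff ν ≠ 0 := ⟨i', i'.isLt, by simpa using hi'⟩
  let i₀ := Nat.find hexi
  obtain ⟨hi₀N, hi₀⟩ := Nat.find_spec hexi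
  have hi₀min : ∀ j : Fin N, (j : ℕ) < i₀ → (u j).coeff ν = 0 := by
    intro j hj
    by_contra hc
    exact Nat.find_min hexi hj ⟨j.isLt, by simpa using hc⟩
  have key := horth ν (ν + i₀)
  rw [Finset.sum_eq_single (⟨i₀, hi₀N⟩ : Fin N)] at key
  · have hcoeff : (X ^ i₀ * u ⟨i₀, hi₀N⟩).coeff (ν + i₀) = (u ⟨i₀, hi₀N⟩).coeff ν := by
      rw [(commute_X_pow _ i₀).eq, coeff_mul_X_pow']
      simp
    rw [hcoeff] at key
    exact hi₀ (by
      have := mul_self_eq_zero.mp key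
      exact this)
  · intro j _ hj
    rcases lt_trichotomy (j : ℕ) i₀ with hlt | heq | hgt
    · rw [hi₀min j hlt, zero_mul]
    · exact absurd (Fin.ext heq) hj
    · have : (X ^ (j : ℕ) * u j).coeff (ν + i₀) = 0 := by
        rw [(commute_X_pow _ _).eq, coeff_mul_X_pow']
        split_ifs with hle
        · exact hνmin _ (by omega) j
        · rfl
      rw [this, mul_zero]
  · intro habs
    exact absurd (Finset.mem_univ _) habs


lemma mulmuley_ratfunc_aux {F : Type*} [Field F] {N : ℕ} (S : Matrix (Fin N) (Fin N) F)
    (hS : Sᵀ = S) (v : Fin N → RatFunc F)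
    (h : (S.map (algebraMap F (RatFunc F))) *ᵥ
        (fun i => (RatFunc.X : RatFunc F) ^ (i : ℕ) * ((S.map (algebraMap F (RatFunc F))) *ᵥ v) i) = 0) :
    (S.map (algebraMap F (RatFunc F))) *ᵥ v = 0 := by
  classical
  set φ : F[X] →+* RatFunc F := (algebraMap F[X] (RatFunc F) : F[X] →+* RatFunc F) with hφ
  have hφinj : Function.Injective φ := IsFractionRing.injective F[X] (RatFunc F)
  -- clear denominators
  obtain ⟨d, hd⟩ := IsLocalization.exist_integer_multiples_of_finite
    (nonZeroDivisors F[X]) v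
  choose v' hv' using hd
  have hdne : φ (d : F[X]) ≠ 0 := fun hc => nonZeroDivisors.ne_zero d.2 (hφinj (by simpa using hc))
  -- identify S over RatFunc with map of S over F[X]
  have hSmap : S.map (algebraMap F (RatFunc F)) = (S.map Polynomial.C).map φ := by
    ext i j
    simp [Matrix.map_apply, hφ, ← Polynomial.algebraMap_eq, ← IsScalarTower.algebraMap_apply]
  have hmv : ∀ (w : Fin N → F[X]) (i : Fin N),
      ((S.map (algebraMap F (RatFunc F))) *ᵥ (fun j => φ (w j))) i
        = φ (((S.map Polynomial.C) *ᵥ w) i) := by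
    intro w i
    rw [hSmap]
    exact (RingHom.map_mulVec φ (S.map Polynomial.C) w i).symm
  set u : Fin N → RatFunc F := (S.map (algebraMap F (RatFunc F))) *ᵥ v with hu
  set u' : Fin N → F[X] := (S.map Polynomial.C) *ᵥ v' with hu'
  have hvint : ∀ i, φ (v' i) = φ (d : F[X]) * v i := by
    intro i
    simpa [Algebra.smul_def, hφ] using hv' i
  have huint : ∀ i, φ (u' i) = φ (d : F[X]) * u i := by
    intro i
    rw [← hmv v' i]
    simp only [hu, Matrix.mulVec, dotProduct]
    rw [Finset.mul_sum]
    exact Finset.sum_congr rfl fun j _ => by rw [hvint j]; ring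
  -- hypothesis over F[X]
  have hX : φ Polynomial.X = RatFunc.X := RatFunc.algebraMap_X
  have hpoly : (S.map Polynomial.C) *ᵥ (fun i => X ^ (i : ℕ) * u' i) = 0 := by
    funext j
    apply hφinj
    rw [← hmv (fun i => X ^ (i : ℕ) * u' i) j]
    have : (fun i : Fin N => φ (X ^ (i : ℕ) * u' i))
        = fun i : Fin N => φ (d : F[X]) * ((RatFunc.X : RatFunc F) ^ (i : ℕ) * u i) := by
      funext i
      rw [_root_.map_mul, map_pow, hX, huint i]; ring
    rw [this]
    have := congrFun h j
    simp only [Pi.zero_apply] at this ⊢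
    rw [map_zero]
    calc (S.map (algebraMap F (RatFunc F)) *ᵥ fun i => φ (d:F[X]) * ((RatFunc.X:RatFunc F) ^ (i:ℕ) * u i)) j
        = φ (d:F[X]) * ((S.map (algebraMap F (RatFunc F)) *ᵥ fun i => (RatFunc.X:RatFunc F) ^ (i:ℕ) * u i) j) := by
          simp only [Matrix.mulVec, dotProduct, Finset.mul_sum]
          exact Finset.sum_congr rfl fun i _ => by ring
      _ = 0 := by rw [this, mul_zero]
  have := mulmuley_poly_aux S hS v' hpoly
  rw [← hu'] at this
  funext i
  have h0 : φ (u' i) = 0 := by rw [this]; simp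
  rw [huint i] at h0
  exact (mul_eq_zero.mp h0).resolve_left hdne

/-- `F(X)^{m+n}` is the direct sum of the kernel and the image of `C = χ * S`:
every vector decomposes uniquely as a sum of a kernel element and an image element. -/
theorem mulmuley_ker_im_direct_sum (F : Type*) [Field F] (m n : ℕ)
    (A : Matrix (Fin m) (Fin n) F)
    (S : Matrix (Fin (m + n)) (Fin (m + n)) (RatFunc F))
    (hS : S = Matrix.reindex finSumFinEquiv finSumFinEquiv
      ((Matrix.fromBlocks 0 A Aᵀ 0).map (algebraMap F (RatFunc F))))
    (χ : Matrix (Fin (m + n)) (Fin (m + n)) (RatFunc F))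
    (hχ : χ = Matrix.diagonal (fun i : Fin (m + n) => (RatFunc.X : RatFunc F) ^ (i : ℕ)))
    (C : Matrix (Fin (m + n)) (Fin (m + n)) (RatFunc F))
    (hC : C = χ * S) :
    ∀ v : Fin (m + n) → RatFunc F,
      ∃! u : (Fin (m + n) → RatFunc F) × (Fin (m + n) → RatFunc F),
        u.1 ∈ LinearMap.ker C.mulVecLin ∧ u.2 ∈ LinearMap.range C.mulVecLin ∧
          v = u.1 + u.2 := by
  classical
  set S₀ : Matrix (Fin (m + n)) (Fin (m + n)) F :=
    Matrix.reindex finSumFinEquiv finSumFinEquiv (Matrix.fromBlocks 0 A Aᵀ 0) with hS₀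
  have hS₀sym : S₀ᵀ = S₀ := by
    rw [hS₀, Matrix.transpose_reindex, Matrix.fromBlocks_transpose]
    simp
  have hSeq : S = S₀.map (algebraMap F (RatFunc F)) := by
    rw [hS, hS₀]
    ext i j
    simp [Matrix.reindex_apply, Matrix.submatrix_apply, Matrix.map_apply]
  have hCmv : ∀ w : Fin (m + n) → RatFunc F,
      C *ᵥ w = fun i : Fin (m + n) => (RatFunc.X : RatFunc F) ^ (i : ℕ) * (S *ᵥ w) i := by
    intro w
    funext i
    rw [hC, ← Matrix.mulVec_mulVec, hχ, Matrix.mulVec_diagonal]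
  have hSw : ∀ w : Fin (m + n) → RatFunc F, C *ᵥ w = 0 → S *ᵥ w = 0 := by
    intro w hw
    funext i
    have := congrFun (hCmv w ▸ hw) i
    simp only [Pi.zero_apply] at this ⊢
    exact (mul_eq_zero.mp this).resolve_left (pow_ne_zero _ RatFunc.X_ne_zero)
  have hdisj : Disjoint (LinearMap.ker C.mulVecLin) (LinearMap.range C.mulVecLin) := by
    rw [Submodule.disjoint_def]
    intro w hwk hwr
    obtain ⟨x, hx⟩ := hwr
    have hwk' : C *ᵥ w = 0 := hwk
    have hw0 : S *ᵥ w = 0 := hSw w hwk'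
    rw [Matrix.mulVecLin_apply] at hx
    have hkey : (S₀.map (algebraMap F (RatFunc F))) *ᵥ
        (fun i : Fin (m + n) => (RatFunc.X : RatFunc F) ^ (i : ℕ)
          * ((S₀.map (algebraMap F (RatFunc F))) *ᵥ x) i) = 0 := by
      have : S *ᵥ (C *ᵥ x) = 0 := by rw [hx, hw0]
      rw [hCmv x, hSeq] at this
      exact this
    have hSx : (S₀.map (algebraMap F (RatFunc F))) *ᵥ x = 0 :=
      mulmuley_ratfunc_aux S₀ hS₀sym x hkey
    rw [← hx, hCmv x, hSeq]
    funext i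
    rw [congrFun hSx i]
    simp
  have hsup : (LinearMap.ker C.mulVecLin) ⊔ (LinearMap.range C.mulVecLin) = ⊤ := by
    apply Submodule.eq_top_of_finrank_eq
    have h1 := Submodule.finrank_sup_add_finrank_inf_eq
      (LinearMap.ker C.mulVecLin) (LinearMap.range C.mulVecLin)
    rw [hdisj.eq_bot, finrank_bot] at h1
    have h2 := LinearMap.finrank_range_add_finrank_ker C.mulVecLin
    omega
  intro v
  have hv : v ∈ (LinearMap.ker C.mulVecLin) ⊔ (LinearMap.range C.mulVecLin) :=
    hsup ▸ Submodule.mem_top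
  rw [Submodule.mem_sup] at hv
  obtain ⟨y, hy, z, hz, hyz⟩ := hv
  refine ⟨(y, z), ⟨hy, hz, hyz.symm⟩, ?_⟩
  rintro ⟨y', z'⟩ ⟨hy', hz', hv'⟩
  simp only at hy' hz' hv'
  have hsum : y + z = y' + z' := hyz.trans hv'
  have hdiff : y' - y ∈ (LinearMap.ker C.mulVecLin) ⊓ (LinearMap.range C.mulVecLin) := by
    constructor
    · exact Submodule.sub_mem _ hy' hy
    · have heq : y' - y = z - z' := by
        rw [sub_eq_sub_iff_add_eq_add, ← hsum]
        abel
      rw [heq]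
      exact Submodule.sub_mem _ hz hz'
  rw [hdisj.eq_bot, Submodule.mem_bot] at hdiff
  have hy'y : y' = y := sub_eq_zero.mp hdiff
  have hz'z : z' = z := by
    rw [hy'y] at hsum
    exact (add_left_cancel hsum).symm
  simp [Prod.ext_iff, hy'y, hz'z]
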